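/- Let (A, μ, α, B) be a quadratic Hom-Novikov superalgebra with α an automorphism satisfying B(α(x), y) = B(x, α(y)). Then the sub-adjacent bracket [x,y] = xy − (−1)^{|x||y|}yx with twisting map α and bilinear form B_α(x,y) := B(α(x), y) is a quadratic Hom-Lie superalgebra; in particular B_α is supersymmetric, nondegenerate, even, invariant (B_α([x,y],z) = B_α(x,[y,z])), and satisfies B_α(α(x),y) = B_α(x,α(y)). -/

import Mathlib

lemma neg_one_pow_mul_self {𝕜 : Type*} [Field 𝕜] (n : ℕ) :
    ((-1:𝕜)^n) * ((-1:𝕜)^n) = 1 := by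
  rw [← pow_add, ← two_mul, pow_mul]; norm_num

lemma neg_one_pow_sq {𝕜 : Type*} [Field 𝕜] (n : ℕ) :
    ((-1:𝕜)^n)^2 = 1 := by
  rw [sq]; exact neg_one_pow_mul_self n

lemma val_add_split {𝕜 : Type*} [Field 𝕜] (a b c : ZMod 2) :
    (-1:𝕜)^(a.val*(b+c).val) = (-1:𝕜)^(a.val*b.val) * (-1:𝕜)^(a.val*c.val) := by
  have key : ∀ a b c : ZMod 2, a.val*(b+c).val % 2 = (a.val*b.val + a.val*c.val) % 2 := by decide
  rw [← pow_add, neg_one_pow_eq_pow_mod_two, key, ← neg_one_pow_eq_pow_mod_two]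

set_option maxHeartbeats 1000000 in
lemma jac_aux {𝕜 A : Type*} [Field 𝕜] [AddCommGroup A] [Module 𝕜 A]
    (p q r : 𝕜) (hp : p^2 = 1) (hq : q^2 = 1) (hr : r^2 = 1)
    (XYz XZy YZx YXz ZXy ZYx xYZ xZY yZX yXZ zXY zYX : A)
    (h1 : XYz - xYZ = p • (YXz - yXZ))
    (h2 : XZy - xZY = r • (ZXy - zXY))
    (h3 : YZx - yZX = q • (ZYx - zYX)) :
    r • (xYZ - q • xZY - (p*r) • (YZx - q • ZYx)) +
    p • (yZX - r • yXZ - (q*p) • (ZXy - r • XZy)) +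
    q • (zXY - p • zYX - (r*q) • (XYz - p • YXz)) = 0 := by
  linear_combination (norm := skip) (-r) • h1 + (q*r) • h2 + (-p) • h3
  match_scalars <;> ring_nf <;> simp [hp, hq, hr]


/-- The sub-adjacent super-commutator bracket `[x,y] = xy - (-1)^(|x||y|) yx`
for homogeneous `x` of degree `i` and `y` of degree `j`. -/
def sbr {𝕜 A : Type*} [Field 𝕜] [AddCommGroup A] [Module 𝕜 A]
    (mul : A →ₗ[𝕜] A →ₗ[𝕜] A) (i j : ZMod 2) (x y : A) : A :=
  mul x y - ((-1 : 𝕜) ^ (i.val * j.val)) • mul y x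

set_option maxHeartbeats 1000000 in
theorem stmt6
    (𝕜 A : Type*) [Field 𝕜] [AddCommGroup A] [Module 𝕜 A]
    (G : ZMod 2 → Submodule 𝕜 A) (hG : DirectSum.IsInternal G)
    (mul : A →ₗ[𝕜] A →ₗ[𝕜] A) (α : A →ₗ[𝕜] A)
    (hmul_even : ∀ i j : ZMod 2, ∀ x ∈ G i, ∀ y ∈ G j, mul x y ∈ G (i + j))
    (hα_even : ∀ i : ZMod 2, ∀ x ∈ G i, α x ∈ G i)
    (hα_mul : ∀ x y : A, α (mul x y) = mul (α x) (α y))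
    (hls : ∀ i j k : ZMod 2, ∀ x ∈ G i, ∀ y ∈ G j, ∀ z ∈ G k,
      mul (mul x y) (α z) - mul (α x) (mul y z)
        = ((-1 : 𝕜) ^ (i.val * j.val)) • (mul (mul y x) (α z) - mul (α y) (mul x z)))
    (hrn : ∀ i j k : ZMod 2, ∀ x ∈ G i, ∀ y ∈ G j, ∀ z ∈ G k,
      mul (mul x y) (α z) = ((-1 : 𝕜) ^ (j.val * k.val)) • mul (mul x z) (α y))
    (B : A →ₗ[𝕜] A →ₗ[𝕜] 𝕜)
    (hB_even : ∀ i j : ZMod 2, i ≠ j → ∀ x ∈ G i, ∀ y ∈ G j, B x y = 0)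
    (hB_sym : ∀ i j : ZMod 2, ∀ x ∈ G i, ∀ y ∈ G j,
      B x y = ((-1 : 𝕜) ^ (i.val * j.val)) * B y x)
    (hB_nd : ∀ x : A, (∀ y : A, B x y = 0) → x = 0)
    (hB_inv : ∀ x y z : A, B (α x) (mul y z) = B (mul x y) (α z))
    (hα_bij : Function.Bijective α)
    (hBα : ∀ x y : A, B (α x) y = B x (α y)) :
    (∀ i j : ZMod 2, ∀ x ∈ G i, ∀ y ∈ G j,
      α (sbr mul i j x y) = sbr mul i j (α x) (α y)) ∧
    (∀ i j : ZMod 2, ∀ x ∈ G i, ∀ y ∈ G j,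
      sbr mul i j x y = -(((-1 : 𝕜) ^ (i.val * j.val)) • sbr mul j i y x)) ∧
    (∀ i j k : ZMod 2, ∀ x ∈ G i, ∀ y ∈ G j, ∀ z ∈ G k,
      ((-1 : 𝕜) ^ (i.val * k.val)) • sbr mul i (j + k) (α x) (sbr mul j k y z)
        + ((-1 : 𝕜) ^ (i.val * j.val)) • sbr mul j (k + i) (α y) (sbr mul k i z x)
        + ((-1 : 𝕜) ^ (j.val * k.val)) • sbr mul k (i + j) (α z) (sbr mul i j x y) = 0) ∧
    (∀ i j : ZMod 2, ∀ x ∈ G i, ∀ y ∈ G j,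
      B (α x) y = ((-1 : 𝕜) ^ (i.val * j.val)) * B (α y) x) ∧
    (∀ x : A, (∀ y : A, B (α x) y = 0) → x = 0) ∧
    (∀ i j : ZMod 2, i ≠ j → ∀ x ∈ G i, ∀ y ∈ G j, B (α x) y = 0) ∧
    (∀ i j k : ZMod 2, ∀ x ∈ G i, ∀ y ∈ G j, ∀ z ∈ G k,
      B (α (sbr mul i j x y)) z = B (α x) (sbr mul j k y z)) ∧
    (∀ x y : A, B (α (α x)) y = B (α x) (α y)) := by
  refine ⟨?_, ?_, ?_, ?_, ?_, ?_, ?_, ?_⟩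
  · intro i j x hx y hy
    simp [sbr, hα_mul]
  · intro i j x hx y hy
    fin_cases i <;> fin_cases j <;> simp [sbr, ZMod.val, sub_smul, smul_sub]
  · intro i j k x hx y hy z hz
    have h1 := hls i j k x hx y hy z hz
    have h2 := hls i k j x hx z hz y hy
    have h3 := hls j k i y hy z hz x hx
    have key := jac_aux ((-1:𝕜)^(i.val*j.val)) ((-1:𝕜)^(j.val*k.val)) ((-1:𝕜)^(i.val*k.val))
      (neg_one_pow_sq _) (neg_one_pow_sq _) (neg_one_pow_sq _)
      (mul (mul x y) (α z)) (mul (mul x z) (α y)) (mul (mul y z) (α x))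
      (mul (mul y x) (α z)) (mul (mul z x) (α y)) (mul (mul z y) (α x))
      (mul (α x) (mul y z)) (mul (α x) (mul z y)) (mul (α y) (mul z x))
      (mul (α y) (mul x z)) (mul (α z) (mul x y)) (mul (α z) (mul y x))
      h1 h2 h3
    simp only [sbr]
    rw [val_add_split (𝕜 := 𝕜) i j k, val_add_split (𝕜 := 𝕜) j k i,
      val_add_split (𝕜 := 𝕜) k i j,
      show j.val * i.val = i.val * j.val from Nat.mul_comm _ _,
      show k.val * i.val = i.val * k.val from Nat.mul_comm _ _,
      show k.val * j.val = j.val * k.val from Nat.mul_comm _ _]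
    simp only [map_sub, map_smul, LinearMap.sub_apply, LinearMap.smul_apply]
    linear_combination (norm := module) key
  · intro i j x hx y hy
    rw [hB_sym i j (α x) (hα_even i x hx) y hy, ← hBα y x]
  · intro x hx
    have h0 : α x = 0 := hB_nd (α x) hx
    apply hα_bij.1
    simpa using h0
  · intro i j hij x hx y hy
    exact hB_even i j hij (α x) (hα_even i x hx) y hy
  · intro i j k x hx y hy z hz
    have A1 : B (α (mul x y)) z = B (α x) (mul y z) := by
      rw [hBα (mul x y) z, hB_inv x y z]
    have A2 : B (α (mul y x)) z = B (α y) (mul x z) := by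
      rw [hBα (mul y x) z, hB_inv y x z]
    have A3 := hB_sym j (i + k) (α y) (hα_even j y hy) (mul x z) (hmul_even i k x hx z hz)
    have A4 : B (mul x z) (α y) = B (α x) (mul z y) := (hB_inv x z y).symm
    have hs : (-1:𝕜)^(j.val*(i+k).val)
        = (-1:𝕜)^(i.val*j.val) * (-1:𝕜)^(j.val*k.val) := by
      rw [val_add_split, Nat.mul_comm j.val i.val]
    have hp2 := neg_one_pow_mul_self (𝕜 := 𝕜) (i.val*j.val)
    simp only [sbr, map_sub, map_smul, LinearMap.sub_apply, LinearMap.smul_apply,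
      smul_eq_mul]
    linear_combination A1 - ((-1:𝕜)^(i.val*j.val)) * A2 - ((-1:𝕜)^(i.val*j.val)) * A3
      - ((-1:𝕜)^(i.val*j.val) * (-1:𝕜)^(j.val*(i+k).val)) * A4
      - ((-1:𝕜)^(i.val*j.val) * (B (α x) (mul z y))) * hs
      - ((-1:𝕜)^(j.val*k.val) * (B (α x) (mul z y))) * hp2
  · intro x y
    exact hBα (α x) y
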